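/- The unique additive map δ̃ : A → A determined on the left R-module basis by δ̃(r·x^n) = δ(r)·x^n for all r ∈ R and n ∈ ℕ is a σ̃-derivation of A, i.e., δ̃(fg) = σ̃(f)·δ̃(g) + δ̃(f)·g for all f, g ∈ A, where σ̃ : A → A is the ring automorphism determined by σ̃(r·x^n) = σ(r)·x^n. -/

import Mathlib

/-- Let `A = R[x; σ, δ]` be an Ore extension of automorphism type:
`A` contains `R` as a subring (via the injective ring homomorphism `ι` sharing the
identity), `σ` is a ring automorphism of `R`, `δ` is a `σ`-derivation commuting with
`σ`, `x·r = σ(r)·x + δ(r)` for all `r ∈ R`, and `A` is free as a left `R`-module with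
basis `{x^n : n ∈ ℕ}`.  Then the unique additive map `δ̃ : A → A` determined on the
basis by `δ̃(r·x^n) = δ(r)·x^n` is a `σ̃`-derivation of `A`, i.e.
`δ̃(fg) = σ̃(f)·δ̃(g) + δ̃(f)·g` for all `f, g ∈ A`, where `σ̃` is the ring
automorphism of `A` determined by `σ̃(r·x^n) = σ(r)·x^n`. -/
theorem skew_poly_extended_delta_is_sigma_derivation
    {R A : Type*} [Ring R] [Ring A] (ι : R →+* A) (hι : Function.Injective ι)
    (x : A) (σ : R ≃+* R) (δ : R → R)
    (hδadd : ∀ r s : R, δ (r + s) = δ r + δ s)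
    (hδmul : ∀ r s : R, δ (r * s) = σ r * δ s + δ r * s)
    (hcomm : ∀ r : R, x * ι r = ι (σ r) * x + ι (δ r))
    (hσδ : ∀ r : R, σ (δ r) = δ (σ r))
    (hbasis : Function.Bijective fun f : ℕ →₀ R => f.sum fun n c => ι c * x ^ n) :
    ∃ (σt : A ≃+* A) (δt : A →+ A),
      (∀ (r : R) (n : ℕ), σt (ι r * x ^ n) = ι (σ r) * x ^ n) ∧
      (∀ (r : R) (n : ℕ), δt (ι r * x ^ n) = ι (δ r) * x ^ n) ∧
      (∀ f g : A, δt (f * g) = σt f * δt g + δt f * g) := by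
  classical
  set E : (ℕ →₀ R) → A := fun f => f.sum fun n c => ι c * x ^ n with hEdef
  have hEadd : ∀ f g : ℕ →₀ R, E (f + g) = E f + E g := by
    intro f g
    exact Finsupp.sum_add_index' (fun n => by simp) (fun n c d => by simp [add_mul])
  let e : (ℕ →₀ R) ≃+ A := { Equiv.ofBijective E hbasis with map_add' := hEadd }
  have he : ∀ f, e f = E f := fun f => rfl
  have hEsingle : ∀ (n : ℕ) (r : R), E (Finsupp.single n r) = ι r * x ^ n := by
    intro n r
    exact Finsupp.sum_single_index (by simp)
  have hesymm : ∀ (n : ℕ) (r : R), e.symm (ι r * x ^ n) = Finsupp.single n r := by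
    intro n r
    rw [AddEquiv.symm_apply_eq, he, hEsingle]
  let δ' : R →+ R := AddMonoidHom.mk' δ hδadd
  have hδ0 : δ 0 = 0 := δ'.map_zero
  let σt0 : A ≃+ A :=
    e.symm.trans ((Finsupp.mapRange.addEquiv (σ : R ≃+ R)).trans e)
  let δt : A →+ A :=
    (e.toAddMonoidHom.comp (Finsupp.mapRange.addMonoidHom δ')).comp e.symm.toAddMonoidHom
  have hσb : ∀ (r : R) (n : ℕ), σt0 (ι r * x ^ n) = ι (σ r) * x ^ n := by
    intro r n
    show e (Finsupp.mapRange σ σ.map_zero (e.symm (ι r * x ^ n))) = _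
    rw [hesymm, Finsupp.mapRange_single, he, hEsingle]
  have hδb : ∀ (r : R) (n : ℕ), δt (ι r * x ^ n) = ι (δ r) * x ^ n := by
    intro r n
    show e (Finsupp.mapRange δ' δ'.map_zero (e.symm (ι r * x ^ n))) = _
    rw [hesymm, Finsupp.mapRange_single, he, hEsingle]
    rfl
  -- induction principle for A
  have hind : ∀ (p : A → Prop), p 0 → (∀ (r : R) (n : ℕ), p (ι r * x ^ n)) →
      (∀ a b, p a → p b → p (a + b)) → ∀ a, p a := by
    intro p h0 hb hadd a
    obtain ⟨f, rfl⟩ := hbasis.surjective a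
    induction f using Finsupp.induction with
    | zero => simpa [E, Finsupp.sum_zero_index] using h0
    | single_add n r f hn hr ih =>
        have : E (Finsupp.single n r + f) = ι r * x ^ n + E f := by
          rw [hEadd, hEsingle]
        exact this ▸ hadd _ _ (hb r n) ih
  -- A1 : σt0 (ι r * a) = ι (σ r) * σt0 a
  have A1 : ∀ (r : R) (a : A), σt0 (ι r * a) = ι (σ r) * σt0 a := by
    intro r
    refine hind _ (by simp) (fun s n => ?_) (fun a b ha hb => ?_)
    · rw [← mul_assoc, ← map_mul, hσb, hσb, map_mul, map_mul, mul_assoc]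
    · rw [mul_add, map_add, ha, hb, map_add, mul_add]
  -- A2 : σt0 (x * a) = x * σt0 a
  have hxmul : ∀ (s : R) (n : ℕ), x * (ι s * x ^ n) = ι (σ s) * x ^ (n + 1) + ι (δ s) * x ^ n := by
    intro s n
    rw [← mul_assoc, hcomm, add_mul, mul_assoc, ← pow_succ']
  have A2 : ∀ a : A, σt0 (x * a) = x * σt0 a := by
    refine hind _ (by simp) (fun s n => ?_) (fun a b ha hb => ?_)
    · rw [hxmul, map_add, hσb, hσb, hσb, hxmul, hσδ]
    · rw [mul_add, map_add, ha, hb, map_add, mul_add]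
  have A2m : ∀ (m : ℕ) (a : A), σt0 (x ^ m * a) = x ^ m * σt0 a := by
    intro m
    induction m with
    | zero => simp
    | succ m ih =>
        intro a
        rw [pow_succ, mul_assoc, ih (x * a), A2, ← mul_assoc, ← pow_succ]
  -- A3 : δt (ι r * a) = ι (σ r) * δt a + ι (δ r) * a
  have A3 : ∀ (r : R) (a : A), δt (ι r * a) = ι (σ r) * δt a + ι (δ r) * a := by
    intro r
    refine hind _ (by simp) (fun s n => ?_) (fun a b ha hb => ?_)
    · rw [← mul_assoc, ← map_mul, hδb, hδb, hδmul, map_add, map_mul, map_mul, add_mul,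
        mul_assoc, mul_assoc]
    · rw [mul_add, map_add, ha, hb, map_add, mul_add, mul_add]
      abel
  -- A4 : δt (x * a) = x * δt a
  have A4 : ∀ a : A, δt (x * a) = x * δt a := by
    refine hind _ (by simp) (fun s n => ?_) (fun a b ha hb => ?_)
    · rw [hxmul, map_add, hδb, hδb, hδb, hxmul, hσδ]
    · rw [mul_add, map_add, ha, hb, map_add, mul_add]
  have A4m : ∀ (m : ℕ) (a : A), δt (x ^ m * a) = x ^ m * δt a := by
    intro m
    induction m with
    | zero => simp
    | succ m ih =>
        intro a
        rw [pow_succ, mul_assoc, ih (x * a), A4, ← mul_assoc, ← pow_succ]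
  -- multiplicativity of σt0
  have hmul : ∀ f g : A, σt0 (f * g) = σt0 f * σt0 g := by
    intro f
    refine hind (fun f => ∀ g, σt0 (f * g) = σt0 f * σt0 g) (by simp) (fun r m g => ?_)
      (fun a b ha hb g => ?_) f
    · rw [mul_assoc, A1, A2m, hσb, mul_assoc]
    · rw [add_mul, map_add, ha, hb, map_add, add_mul]
  -- derivation property
  have hder : ∀ f g : A, δt (f * g) = σt0 f * δt g + δt f * g := by
    intro f
    refine hind (fun f => ∀ g, δt (f * g) = σt0 f * δt g + δt f * g) (by simp)
      (fun r m g => ?_) (fun a b ha hb g => ?_) f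
    · rw [mul_assoc, A3, A4m, hσb, hδb, mul_assoc, mul_assoc]
    · rw [add_mul, map_add, ha, hb, map_add, map_add, add_mul, add_mul]
      abel
  exact ⟨{ σt0 with map_mul' := hmul }, δt, hσb, hδb, fun f g => hder f g ▸ rfl⟩
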